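/- Let N ≥ 5 be an integer and let p₁,…,p_r be the distinct prime factors of N. Then there exists an irreducible λ-quiddity over ℤ/Nℤ of size at least N, and every irreducible λ-quiddity over ℤ/Nℤ has size at most (N²/2)·∏_{i=1}^{r}(1 − 1/p_i²) + 2. -/

import Mathlib

/-- The matrix `[[a, -1], [1, 0]]`. -/
def mMat {A : Type*} [CommRing A] (a : A) : Matrix (Fin 2) (Fin 2) A := !![a, -1; 1, 0]

/-- `M_n(a₁, …, aₙ) = mMat aₙ * ⋯ * mMat a₁`, for the tuple given as a list `[a₁, …, aₙ]`. -/
def mProd {A : Type*} [CommRing A] (l : List A) : Matrix (Fin 2) (Fin 2) A :=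
  ((l.map mMat).reverse).prod

/-- The sum `(a₁,…,aₙ) ⊕ (b₁,…,b_m) = (a₁+b_m, a₂,…,a_{n−1}, aₙ+b₁, b₂,…,b_{m−1})`. -/
def oplus {A : Type*} [CommRing A] (a b : List A) : List A :=
  (a.headD 0 + b.getLastD 0) ::
    (a.dropLast.tail ++ (a.getLastD 0 + b.headD 0) :: b.dropLast.tail)

/-- Two tuples are equivalent if one is a cyclic rotation of the other or of its reversal. -/
def TupEquiv {A : Type*} (a b : List A) : Prop :=
  (∃ k, b = a.rotate k) ∨ (∃ k, b = a.reverse.rotate k)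

/-- A λ-quiddity over `R ⊆ A`: all entries lie in `R` and `M_n(a₁,…,aₙ) = ± Id`. -/
def IsQuiddity {A : Type*} [CommRing A] (R : Set A) (c : List A) : Prop :=
  (∀ x ∈ c, x ∈ R) ∧ (mProd c = 1 ∨ mProd c = -1)

/-- A λ-quiddity `c` over `R` is reducible if `c ∼ a ⊕ b` with `a ∈ R^m`, `m ≥ 3`,
and `b` a λ-quiddity over `R` of size `l ≥ 3`. -/
def IsReducible {A : Type*} [CommRing A] (R : Set A) (c : List A) : Prop :=
  ∃ a b : List A, 3 ≤ a.length ∧ 3 ≤ b.length ∧ (∀ x ∈ a, x ∈ R) ∧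
    IsQuiddity R b ∧ TupEquiv c (oplus a b)

/-- An irreducible λ-quiddity over `R`: a λ-quiddity of size `≥ 3` which is not reducible. -/
def IrreducibleQuiddity {A : Type*} [CommRing A] (R : Set A) (c : List A) : Prop :=
  IsQuiddity R c ∧ 3 ≤ c.length ∧ ¬ IsReducible R c

/-- The continuant `K_i(a₁,…,a_i)`, determinant of the tridiagonal matrix with diagonal
`a₁,…,a_i` and off-diagonal entries `1`; `K₀ = 1`. -/
def cont {A : Type*} [CommRing A] : List A → A
  | [] => 1
  | [a] => a
  | a :: b :: l => a * cont (b :: l) - cont l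

section Helpers

set_option linter.unusedSectionVars false

variable {A : Type*} [CommRing A]

@[simp] lemma mProd_nil : mProd ([] : List A) = 1 := rfl

@[simp] lemma mProd_singleton (a : A) : mProd [a] = mMat a := by
  simp [mProd]

lemma mProd_append (u v : List A) : mProd (u ++ v) = mProd v * mProd u := by
  simp [mProd, List.reverse_append]

lemma mProd_cons (a : A) (l : List A) : mProd (a :: l) = mProd l * mMat a := by
  rw [show a :: l = [a] ++ l from rfl, mProd_append, mProd_singleton]

lemma mProd_concat (a : A) (l : List A) : mProd (l ++ [a]) = mMat a * mProd l := by
  rw [mProd_append, mProd_singleton]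

@[simp] lemma det_mMat (a : A) : (mMat a).det = 1 := by
  simp [mMat, Matrix.det_fin_two_of]

lemma det_mProd (l : List A) : (mProd l).det = 1 := by
  induction l with
  | nil => simp
  | cons a l ih => rw [mProd_cons, Matrix.det_mul, ih, det_mMat, one_mul]

lemma mProd_take_mul (c : List A) (i j : ℕ) (hij : i ≤ j) :
    mProd (c.take j) = mProd ((c.take j).drop i) * mProd (c.take i) := by
  conv_lhs => rw [← (c.take j).take_append_drop i]
  rw [mProd_append, List.take_take, min_eq_left hij]

lemma mProd_replicate_two (n : ℕ) :
    mProd (List.replicate n (2 : A)) = !![(n : A) + 1, -(n : A); (n : A), 1 - (n : A)] := by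
  induction n with
  | zero => simp [Matrix.one_fin_two]
  | succ n ih =>
      rw [List.replicate_succ, mProd_cons, ih]
      simp [mMat, Matrix.mul_fin_two]
      ring_nf
      exact ⟨trivial, trivial⟩

lemma neg_one_fin_two : (-1 : Matrix (Fin 2) (Fin 2) A) = !![-1, 0; 0, -1] := by
  rw [Matrix.one_fin_two]
  ext i j
  fin_cases i <;> fin_cases j <;> simp

lemma key_matrix (t e : A) (he : e * e = 1) :
    mMat 0 * (!![e, t; 0, e] * mMat (-(e * t))) = !![-e, 0; 0, -e] := by
  have h1 : !![e, t; 0, e] * mMat (-(e * t)) = !![0, -e; e, 0] := by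
    rw [mMat, Matrix.mul_fin_two]
    ext i j
    fin_cases i <;> fin_cases j <;> simp <;> linear_combination (-t) * he
  rw [h1, mMat, Matrix.mul_fin_two]
  ext i j
  fin_cases i <;> fin_cases j <;> simp

lemma exists_cons_concat (l : List A) (h : 2 ≤ l.length) : ∃ p q r, l = p :: (q ++ [r]) := by
  match l, h with
  | p :: t, h =>
    have ht : t ≠ [] := by
      intro h'; subst h'; simp at h
    exact ⟨p, t.dropLast, t.getLast ht, by rw [List.dropLast_append_getLast ht]⟩

lemma key_red (c' : List A) (k : ℕ) (hk1 : 1 ≤ k) (hk3 : k + 3 ≤ c'.length)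
    (h10 : (mProd (c'.drop (c'.length - k))) 1 0 = 0)
    (h11 : (mProd (c'.drop (c'.length - k))) 1 1 = 1 ∨
           (mProd (c'.drop (c'.length - k))) 1 1 = -1) :
    IsReducible Set.univ c' := by
  set n := c'.length with hn
  set w := c'.drop (n - k) with hw
  set u := c'.take (n - k) with hu
  have hwlen : w.length = k := by
    rw [hw, List.length_drop]; omega
  have hulen : u.length = n - k := by
    rw [hu, List.length_take]; omega
  obtain ⟨p, q, r, hpqr⟩ := exists_cons_concat u (by omega)
  set P := mProd w with hP
  have hdet := det_mProd w
  rw [Matrix.det_fin_two] at hdet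
  rw [← hP] at hdet
  rw [h10, mul_zero, sub_zero] at hdet
  set e := P 1 1 with he
  have hee : e * e = 1 := by rcases h11 with h | h <;> rw [h] <;> ring
  have hP00 : P 0 0 = e := by
    have : P 0 0 * e * e = 1 * e := by rw [hdet]
    rwa [mul_assoc, hee, mul_one, one_mul] at this
  set x := -(e * P 0 1) with hx
  refine ⟨p :: (q ++ [r - x]), x :: (w ++ [0]), ?_, ?_, fun _ _ => Set.mem_univ _, ⟨fun _ _ => Set.mem_univ _, ?_⟩, ?_⟩
  · have : (p :: (q ++ [r - x])).length = u.length := by simp [hpqr]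
    omega
  · simp; omega
  · have hmb : mProd (x :: (w ++ [0])) = mMat 0 * (P * mMat x) := by
      rw [mProd_cons, mProd_concat, hP, mul_assoc]
    have : P = !![e, P 0 1; 0, e] := by
      conv_lhs => rw [Matrix.eta_fin_two P]
      rw [hP00, h10, ← he]
    rw [hmb, this, hx, key_matrix _ _ hee]
    rcases h11 with h | h
    · right; rw [neg_one_fin_two, h]
    · left; rw [Matrix.one_fin_two, h]; norm_num
  · left
    refine ⟨0, ?_⟩
    rw [List.rotate_zero]
    symm
    show c' = oplus (p :: (q ++ [r - x])) (x :: (w ++ [0]))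
    have h1 : (p :: (q ++ [r - x])).dropLast = p :: q := by
      rw [show p :: (q ++ [r - x]) = (p :: q) ++ [r - x] from rfl, List.dropLast_concat]
    have h2 : (p :: (q ++ [r - x])).getLastD 0 = r - x := by
      rw [show p :: (q ++ [r - x]) = (p :: q) ++ [r - x] from rfl, List.getLastD_concat]
    have h3 : (x :: (w ++ [0])).getLastD 0 = 0 := by
      rw [show x :: (w ++ [(0:A)]) = (x :: w) ++ [0] from rfl, List.getLastD_concat]
    have h4 : (x :: (w ++ [0])).dropLast = x :: w := by
      rw [show x :: (w ++ [(0:A)]) = (x :: w) ++ [0] from rfl, List.dropLast_concat]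
    rw [oplus, h1, h2, h3, h4]
    simp only [List.headD_cons, List.tail_cons]
    rw [add_zero, sub_add_cancel]
    conv_lhs => rw [← c'.take_append_drop (n - k), ← hw, ← hu, hpqr]
    simp

lemma isReducible_of_rotate {c : List A} {t : ℕ}
    (h : IsReducible Set.univ (c.rotate t)) : IsReducible Set.univ c := by
  obtain ⟨a, b, ha, hb, hmem, hq, heq⟩ := h
  refine ⟨a, b, ha, hb, hmem, hq, ?_⟩
  rcases heq with ⟨k, hk⟩ | ⟨k, hk⟩
  · exact Or.inl ⟨t + k, by rw [hk, List.rotate_rotate]⟩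
  · have : c.reverse ~r (c.rotate t).reverse := (List.IsRotated.reverse ⟨t, rfl⟩)
    obtain ⟨m, hm⟩ := this
    exact Or.inr ⟨m + k, by rw [hk, ← hm, List.rotate_rotate]⟩

lemma mul_adj_entries (M N : Matrix (Fin 2) (Fin 2) A) (e : A)
    (hdN : N.det = 1) (h0 : M 1 0 = e * N 1 0) (h1 : M 1 1 = e * N 1 1) :
    (M * N.adjugate) 1 0 = 0 ∧ (M * N.adjugate) 1 1 = e := by
  rw [Matrix.det_fin_two] at hdN
  rw [Matrix.adjugate_fin_two]
  constructor
  · simp [Matrix.mul_apply, Fin.sum_univ_two]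
    rw [h0, h1]
    ring
  · simp [Matrix.mul_apply, Fin.sum_univ_two]
    rw [h0, h1]
    linear_combination e * hdN

lemma rows_neq (c : List A) (hq : mProd c = 1 ∨ mProd c = -1)
    (hnr : ¬ IsReducible Set.univ c) (hn : 5 ≤ c.length)
    (i j : ℕ) (hj : j < c.length) (hij : i < j)
    (e : A) (he : e = 1 ∨ e = -1)
    (h0 : (mProd (c.take j)) 1 0 = e * (mProd (c.take i)) 1 0)
    (h1 : (mProd (c.take j)) 1 1 = e * (mProd (c.take i)) 1 1) : False := by
  set n := c.length with hn'
  have hee : e * e = 1 := by rcases he with h | h <;> rw [h] <;> ring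
  set Mi := mProd (c.take i) with hMi
  set Mj := mProd (c.take j) with hMj
  have hdi : Mi.det = 1 := det_mProd _
  have hdj : Mj.det = 1 := det_mProd _
  by_cases hcase : j - i ≤ n - 3
  · -- inner segment
    set k := j - i with hk
    have hinv : Mi * Mi.adjugate = 1 := by
      rw [Matrix.mul_adjugate, hdi, one_smul]
    have hQ : mProd ((c.take j).drop i) = Mj * Mi.adjugate := by
      have h := mProd_take_mul c i j (le_of_lt hij)
      calc mProd ((c.take j).drop i)
          = mProd ((c.take j).drop i) * (Mi * Mi.adjugate) := by rw [hinv, mul_one]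
        _ = (mProd ((c.take j).drop i) * Mi) * Mi.adjugate := by rw [mul_assoc]
        _ = Mj * Mi.adjugate := by rw [← h]
    obtain ⟨e10, e11⟩ := mul_adj_entries Mj Mi e hdi h0 h1
    have hseg : (c.rotate j).drop ((c.rotate j).length - k) = (c.take j).drop i := by
      rw [List.length_rotate, List.rotate_eq_drop_append_take (le_of_lt hj),
        List.drop_append]
      have l1 : (c.drop j).length = n - j := by rw [List.length_drop]
      have h2 : (c.drop j).drop (n - k) = [] := by
        apply List.drop_eq_nil_of_le
        omega
      rw [h2, List.nil_append]
      congr 1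
      omega
    apply hnr
    apply isReducible_of_rotate (t := j)
    apply key_red _ k (by omega) (by rw [List.length_rotate]; omega)
    · rw [hseg, hQ, e10]
    · rw [hseg, hQ, e11]
      exact he
  · -- outer segment
    set k := n - (j - i) with hk
    have hinv : Mj * Mj.adjugate = 1 := by
      rw [Matrix.mul_adjugate, hdj, one_smul]
    have hdropj : mProd (c.drop j) = mProd c * Mj.adjugate := by
      have h : mProd c = mProd (c.drop j) * Mj := by
        conv_lhs => rw [← c.take_append_drop j]
        rw [mProd_append]
      calc mProd (c.drop j)
          = mProd (c.drop j) * (Mj * Mj.adjugate) := by rw [hinv, mul_one]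
        _ = (mProd (c.drop j) * Mj) * Mj.adjugate := by rw [mul_assoc]
        _ = mProd c * Mj.adjugate := by rw [← h]
    have hseg : (c.rotate i).drop ((c.rotate i).length - k) = c.drop j ++ c.take i := by
      rw [List.length_rotate, List.rotate_eq_drop_append_take (hij.trans hj).le,
        List.drop_append]
      congr 1
      · rw [List.drop_drop]
        congr 1
        omega
      · have e2 : n - k - (c.drop i).length = 0 := by rw [List.length_drop]; omega
        rw [e2, List.drop_zero]
    have hQ : mProd (c.drop j ++ c.take i) = Mi * (mProd c * Mj.adjugate) := by
      rw [mProd_append, hdropj]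
    obtain ⟨e10, e11⟩ := mul_adj_entries Mi Mj e hdj
      (by rw [h0, ← mul_assoc, hee, one_mul])
      (by rw [h1, ← mul_assoc, hee, one_mul])
    apply hnr
    apply isReducible_of_rotate (t := i)
    apply key_red _ k (by omega) (by rw [List.length_rotate]; omega)
    · rw [hseg, hQ]
      rcases hq with h | h
      · rw [h, one_mul, e10]
      · rw [h, neg_one_mul, mul_neg, Matrix.neg_apply, e10, neg_zero]
    · rw [hseg, hQ]
      rcases hq with h | h
      · rw [h, one_mul, e11]
        exact he
      · rw [h, neg_one_mul, mul_neg, Matrix.neg_apply, e11]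
        rcases he with h' | h' <;> rw [h'] <;> simp

lemma replicate_irred (N : ℕ) (hN : 5 ≤ N) :
    IrreducibleQuiddity (Set.univ : Set (ZMod N)) (List.replicate N (2 : ZMod N)) := by
  refine ⟨⟨fun _ _ => Set.mem_univ _, Or.inl ?_⟩, by simp; omega, ?_⟩
  · rw [mProd_replicate_two, ZMod.natCast_self]
    rw [Matrix.one_fin_two]
    norm_num
  · rintro ⟨a, b, ha, hb, -, ⟨-, hbq⟩, heq⟩
    -- all entries of `oplus a b` are 2, and its length is N
    have hmem : ∀ x ∈ oplus a b, x = (2 : ZMod N) := by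
      rcases heq with ⟨k, hk⟩ | ⟨k, hk⟩ <;> intro x hx <;> rw [hk] at hx <;>
        [skip; rw [List.mem_rotate, List.mem_reverse] at hx] <;>
        [rw [List.mem_rotate] at hx; skip] <;>
        exact (List.eq_of_mem_replicate hx)
    have hlen : (oplus a b).length = N := by
      rcases heq with ⟨k, hk⟩ | ⟨k, hk⟩ <;> rw [hk] <;> simp
    obtain ⟨p, q, r, hpqr⟩ := exists_cons_concat b (by omega)
    have hdt : b.dropLast.tail = q := by
      rw [hpqr, show p :: (q ++ [r]) = (p :: q) ++ [r] from rfl, List.dropLast_concat,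
        List.tail_cons]
    have hqmem : ∀ u ∈ q, u = (2 : ZMod N) := by
      intro u hu
      apply hmem
      rw [oplus]
      exact List.mem_cons_of_mem _
        (List.mem_append_right _ (List.mem_cons_of_mem _ (by rw [hdt]; exact hu)))
    set k := q.length with hkdef
    have hqrep : q = List.replicate k (2 : ZMod N) := List.eq_replicate_of_mem hqmem
    have hblen : b.length = k + 2 := by rw [hpqr]; simp [hkdef]
    have holen : (oplus a b).length = (a.length - 2) + k + 2 := by
      rw [oplus]
      simp only [List.length_cons, List.length_append, List.length_tail,
        List.length_dropLast, hdt]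
      omega
    have hk1 : 1 ≤ k := by omega
    have hk2 : k ≤ N - 3 := by omega
    have hml : mProd b = (mMat r * mProd (List.replicate k (2 : ZMod N))) * mMat p := by
      rw [hpqr, mProd_cons, mProd_concat, hqrep]
    have h11 : ((mMat r * mProd (List.replicate k (2 : ZMod N))) * mMat p) 1 1
        = -((k : ZMod N) + 1) := by
      rw [mProd_replicate_two]
      simp [mMat, Matrix.mul_apply, Fin.sum_univ_two]
    rcases hbq with h | h
    · have := congrFun (congrFun h 1) 1
      rw [hml, h11, Matrix.one_apply_eq] at this
      have h2 : ((k + 2 : ℕ) : ZMod N) = 0 := by push_cast; linear_combination -this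
      rw [ZMod.natCast_eq_zero_iff] at h2
      have := Nat.le_of_dvd (by omega) h2
      omega
    · have := congrFun (congrFun h 1) 1
      rw [hml, h11] at this
      simp only [Matrix.neg_apply, Matrix.one_apply_eq] at this
      have h2 : ((k : ℕ) : ZMod N) = 0 := by linear_combination -this
      rw [ZMod.natCast_eq_zero_iff] at h2
      have := Nat.le_of_dvd (by omega) h2
      omega

lemma count_bound (N : ℕ) (hN : 5 ≤ N) (S : Finset (ZMod N × ZMod N))
    (hS : ∀ v ∈ S, IsCoprime v.1 v.2) :
    (S.card : ℚ) ≤ (N : ℚ) ^ 2 * ∏ p ∈ N.primeFactors, (1 - 1 / (p : ℚ) ^ 2) := by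
  classical
  haveI : NeZero N := ⟨by omega⟩
  set ι := { p : ℕ // p ∈ N.primeFactors } with hι
  haveI hF : ∀ i : ι, Fact (Nat.Prime i.1) :=
    fun i => ⟨Nat.prime_of_mem_primeFactors i.2⟩
  haveI hNZ : ∀ i : ι, NeZero (i.1) := fun i => ⟨(hF i).out.pos.ne'⟩
  set R := ∏ p ∈ N.primeFactors, p with hR
  have hRdvd : R ∣ N := Nat.prod_primeFactors_dvd N
  have hRpos : 0 < R := Finset.prod_pos fun p hp => (Nat.prime_of_mem_primeFactors hp).pos
  -- the componentwise reduction map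
  set phi : ZMod N × ZMod N → (∀ i : ι, ZMod i.1 × ZMod i.1) :=
    fun v i => (ZMod.castHom (Nat.dvd_of_mem_primeFactors i.2) (ZMod i.1) v.1,
                ZMod.castHom (Nat.dvd_of_mem_primeFactors i.2) (ZMod i.1) v.2) with hphi
  set T : Finset (∀ i : ι, ZMod i.1 × ZMod i.1) :=
    Fintype.piFinset (fun i => Finset.univ.filter (fun u => u ≠ 0)) with hT
  set K : Finset (ZMod N) :=
    Finset.univ.filter (fun x : ZMod N =>
      ∀ i : ι, ZMod.castHom (Nat.dvd_of_mem_primeFactors i.2) (ZMod i.1) x = 0) with hK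
  -- membership of pairs in T
  have hmaps : ∀ v ∈ S, phi v ∈ T := by
    intro v hv
    rw [hT, Fintype.mem_piFinset]
    intro i
    simp only [Finset.mem_filter, Finset.mem_univ, true_and]
    intro hzero
    obtain ⟨a, b, hab⟩ := hS v hv
    have h1 : (phi v i).1 = 0 := by rw [hzero]; rfl
    have h2 : (phi v i).2 = 0 := by rw [hzero]; rfl
    have := congrArg (ZMod.castHom (Nat.dvd_of_mem_primeFactors i.2) (ZMod i.1)) hab
    rw [map_add, map_mul, map_mul, map_one] at this
    rw [show ZMod.castHom (Nat.dvd_of_mem_primeFactors i.2) (ZMod i.1) v.1 = (phi v i).1 from rfl,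
      show ZMod.castHom (Nat.dvd_of_mem_primeFactors i.2) (ZMod i.1) v.2 = (phi v i).2 from rfl,
      h1, h2, mul_zero, mul_zero, add_zero] at this
    exact zero_ne_one this
  -- fibers of phi have size at most K.card * K.card
  have hfiber : ∀ t ∈ T, (S.filter (fun v => phi v = t)).card ≤ K.card * K.card := by
    intro t _
    rcases (S.filter (fun v => phi v = t)).eq_empty_or_nonempty with hE | ⟨v₀, hv₀⟩
    · simp [hE]
    · have hinj := Finset.card_le_card_of_injOn
        (f := fun v : ZMod N × ZMod N => (v.1 - v₀.1, v.2 - v₀.2))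
        (s := S.filter (fun v => phi v = t)) (t := K ×ˢ K) ?_ ?_
      · rwa [Finset.card_product] at hinj
      · intro v hv
        rw [Finset.mem_coe, Finset.mem_filter] at hv; rw [Finset.mem_filter] at hv₀
        have hphiv : phi v = phi v₀ := by rw [hv.2, hv₀.2]
        rw [Finset.mem_coe, Finset.mem_product, hK]
        constructor <;> rw [Finset.mem_filter] <;> refine ⟨Finset.mem_univ _, fun i => ?_⟩ <;>
          have hcomp := congrFun hphiv i
        · have h1 : (phi v i).1 = (phi v₀ i).1 := by rw [hcomp]
          rw [map_sub]
          rw [show (ZMod.castHom (Nat.dvd_of_mem_primeFactors i.2) (ZMod i.1)) v.1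
            = (phi v i).1 from rfl, show (ZMod.castHom (Nat.dvd_of_mem_primeFactors i.2)
            (ZMod i.1)) v₀.1 = (phi v₀ i).1 from rfl, h1, sub_self]
        · have h1 : (phi v i).2 = (phi v₀ i).2 := by rw [hcomp]
          rw [map_sub]
          rw [show (ZMod.castHom (Nat.dvd_of_mem_primeFactors i.2) (ZMod i.1)) v.2
            = (phi v i).2 from rfl, show (ZMod.castHom (Nat.dvd_of_mem_primeFactors i.2)
            (ZMod i.1)) v₀.2 = (phi v₀ i).2 from rfl, h1, sub_self]
      · intro v _ w _ hvw
        simp only [Prod.mk.injEq, sub_left_inj] at hvw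
        exact Prod.ext hvw.1 hvw.2
  -- main cardinality estimate
  have hcard : S.card ≤ K.card * K.card * T.card :=
    Finset.card_le_mul_card_image_of_maps_to hmaps _ hfiber
  -- every element of K has value divisible by R
  have hKdvd : ∀ x ∈ K, R ∣ x.val := by
    intro x hx
    rw [hK, Finset.mem_filter] at hx
    rw [hR]
    apply Finset.prod_primes_dvd
    · exact fun p hp => (Nat.prime_of_mem_primeFactors hp).prime
    · intro p hp
      have h := hx.2 ⟨p, hp⟩
      rw [ZMod.castHom_apply, ← ZMod.natCast_val, ZMod.natCast_eq_zero_iff] at h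
      exact h
  -- bound for K
  have hKcard : K.card ≤ N / R := by
    have hle : K.card ≤ (Finset.range (N / R)).card := by
      apply Finset.card_le_card_of_injOn (fun x => x.val / R)
      · intro x hx
        rw [Finset.mem_coe, Finset.mem_range]; beta_reduce
        rcases Nat.eq_zero_or_pos x.val with h0 | h0
        · rw [h0, Nat.zero_div]
          exact Nat.div_pos (Nat.le_of_dvd (by omega) hRdvd) hRpos
        · exact Nat.div_lt_div_of_lt_of_dvd hRdvd (ZMod.val_lt x)
      · intro x hx y hy hxy
        apply ZMod.val_injective
        obtain ⟨x', hx'⟩ := hKdvd x hx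
        obtain ⟨y', hy'⟩ := hKdvd y hy
        simp only at hxy
        rw [hx', hy', Nat.mul_div_cancel_left _ hRpos, Nat.mul_div_cancel_left _ hRpos] at hxy
        rw [hx', hy', hxy]
    rwa [Finset.card_range] at hle
  -- card of T
  have hTcard : T.card = ∏ i : ι, (i.1 * i.1 - 1) := by
    rw [hT, Fintype.card_piFinset]
    apply Finset.prod_congr rfl
    intro i _
    rw [Finset.filter_ne', Finset.card_erase_of_mem (Finset.mem_univ _), Finset.card_univ,
      Fintype.card_prod, ZMod.card]
  have hnat : S.card ≤ (N / R) * (N / R) * ∏ i : ι, (i.1 * i.1 - 1) := by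
    calc S.card ≤ K.card * K.card * T.card := hcard
      _ ≤ (N / R) * (N / R) * T.card :=
          Nat.mul_le_mul_right _ (Nat.mul_le_mul hKcard hKcard)
      _ = (N / R) * (N / R) * ∏ i : ι, (i.1 * i.1 - 1) := by rw [hTcard]
  have hRQ : ((R : ℕ) : ℚ) ≠ 0 := by exact_mod_cast hRpos.ne'
  have hNR : ((N / R : ℕ) : ℚ) = (N : ℚ) / (R : ℚ) := by
    rw [Nat.cast_div hRdvd hRQ]
  have hprodcast : ((∏ i : ι, (i.1 * i.1 - 1) : ℕ) : ℚ)
      = ∏ p ∈ N.primeFactors, ((p : ℚ) ^ 2 - 1) := by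
    rw [Nat.cast_prod]
    rw [Finset.prod_coe_sort (s := N.primeFactors)
      (f := fun p => (((p * p - 1 : ℕ) : ℚ)))]
    apply Finset.prod_congr rfl
    intro p hp
    have h2 : 2 ≤ p := (Nat.prime_of_mem_primeFactors hp).two_le
    have h1 : 1 ≤ p * p := by nlinarith
    rw [Nat.cast_sub h1]
    push_cast
    ring
  have hfactor : ∀ p ∈ N.primeFactors, ((p : ℚ) ^ 2 - 1)
      = (p : ℚ) ^ 2 * (1 - 1 / (p : ℚ) ^ 2) := by
    intro p hp
    have h2 : (2 : ℚ) ≤ (p : ℚ) := by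
      exact_mod_cast (Nat.prime_of_mem_primeFactors hp).two_le
    have hp0 : (p : ℚ) ≠ 0 := by linarith
    field_simp
  calc (S.card : ℚ) ≤ (((N / R) * (N / R) * ∏ i : ι, (i.1 * i.1 - 1) : ℕ) : ℚ) := by
        exact_mod_cast hnat
    _ = (N : ℚ) ^ 2 * ∏ p ∈ N.primeFactors, (1 - 1 / (p : ℚ) ^ 2) := by
        push_cast [hNR, hprodcast]
        rw [Finset.prod_congr rfl hfactor, Finset.prod_mul_distrib, Finset.prod_pow]
        have hRprod : (∏ p ∈ N.primeFactors, (p : ℚ)) = (R : ℚ) := by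
          rw [hR]; push_cast; rfl
        rw [hRprod]
        field_simp

lemma upper_bound (N : ℕ) (hN : 5 ≤ N) (c : List (ZMod N))
    (h : IrreducibleQuiddity Set.univ c) :
    (c.length : ℚ) ≤ (N : ℚ) ^ 2 / 2 * ∏ p ∈ N.primeFactors, (1 - 1 / (p : ℚ) ^ 2) + 2 := by
  classical
  obtain ⟨⟨-, hq⟩, hlen3, hnr⟩ := h
  haveI : NeZero N := ⟨by omega⟩
  set n := c.length with hn
  set P : ℚ := ∏ p ∈ N.primeFactors, (1 - 1 / (p : ℚ) ^ 2) with hP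
  have hN5 : (5 : ℚ) ≤ (N : ℚ) := by exact_mod_cast hN
  -- a cheap lower bound for N² P
  have hNP : (N : ℚ) ≤ (N : ℚ) ^ 2 * P := by
    have hinj : Function.Injective (fun x : ZMod N => (x, (1 : ZMod N))) := by
      intro a b hab
      simpa using hab
    have hb := count_bound N hN (Finset.univ.image (fun x : ZMod N => (x, (1 : ZMod N))))
      (by
        intro v hv
        rw [Finset.mem_image] at hv
        obtain ⟨x, -, rfl⟩ := hv
        exact ⟨0, 1, by ring⟩)
    rwa [Finset.card_image_of_injective _ hinj, Finset.card_univ, ZMod.card] at hb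
  by_cases h5 : 5 ≤ n
  · -- the main case
    set f : ℕ → ZMod N × ZMod N :=
      fun i => ((mProd (c.take i)) 1 0, (mProd (c.take i)) 1 1) with hf
    have hdet : ∀ i : ℕ, (mProd (c.take i)) 0 0 * (mProd (c.take i)) 1 1
        - (mProd (c.take i)) 0 1 * (mProd (c.take i)) 1 0 = 1 := by
      intro i
      have hd := det_mProd (c.take i)
      rwa [Matrix.det_fin_two] at hd
    have hcol : ∀ e : ZMod N, (e = 1 ∨ e = -1) → ∀ i j : ℕ, j < n → i < j →
        f j = (e * (f i).1, e * (f i).2) → False := by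
      intro e he i j hj hij hfij
      rw [hf, Prod.mk.injEq] at hfij
      exact rows_neq c hq hnr h5 i j hj hij e he hfij.1 hfij.2
    have hneg : ∀ i : ℕ, f i ≠ (-(f i).1, -(f i).2) := by
      intro i hcon
      rw [hf, Prod.mk.injEq] at hcon
      have h2 : (2 : ZMod N) * (mProd (c.take i)) 1 0 = 0 := by
        have := hcon.1; linear_combination this
      have h3 : (2 : ZMod N) * (mProd (c.take i)) 1 1 = 0 := by
        have := hcon.2; linear_combination this
      have h4 : (2 : ZMod N) = 0 := by
        have hd := hdet i
        linear_combination (-2 : ZMod N) * hd + (mProd (c.take i)) 0 0 * h3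
          - (mProd (c.take i)) 0 1 * h2
      have h5' : ((2 : ℕ) : ZMod N) = 0 := by exact_mod_cast h4
      rw [ZMod.natCast_eq_zero_iff] at h5'
      have := Nat.le_of_dvd (by omega) h5'
      omega
    set g : ℕ → ZMod N × ZMod N := fun i => (-(f i).1, -(f i).2) with hg
    set S : Finset (ZMod N × ZMod N) :=
      ((Finset.range n).image f) ∪ ((Finset.range n).image g) with hSdef
    have hcop : ∀ v ∈ S, IsCoprime v.1 v.2 := by
      intro v hv
      rw [hSdef, Finset.mem_union, Finset.mem_image, Finset.mem_image] at hv
      rcases hv with ⟨i, -, rfl⟩ | ⟨i, -, rfl⟩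
      · exact ⟨-(mProd (c.take i)) 0 1, (mProd (c.take i)) 0 0,
          by have := hdet i; rw [hf]; linear_combination this⟩
      · exact ⟨(mProd (c.take i)) 0 1, -(mProd (c.take i)) 0 0,
          by have := hdet i; rw [hg, hf]; linear_combination this⟩
    have hcol1 : ∀ e : ZMod N, (e = 1 ∨ e = -1) → ∀ i j : ℕ, i < n → j < n → i ≠ j →
        f j = (e * (f i).1, e * (f i).2) → False := by
      intro e he i j hi hj hij hfij
      have hee : e * e = 1 := by rcases he with h | h <;> rw [h] <;> ring
      rcases Nat.lt_or_ge i j with hlt | hge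
      · exact hcol e he i j hj hlt hfij
      · have hlt : j < i := by omega
        apply hcol e he j i hi hlt
        have h1 : (f j).1 = e * (f i).1 := by rw [hfij]
        have h2 : (f j).2 = e * (f i).2 := by rw [hfij]
        have k1 : e * (f j).1 = (f i).1 := by rw [h1, ← mul_assoc, hee, one_mul]
        have k2 : e * (f j).2 = (f i).2 := by rw [h2, ← mul_assoc, hee, one_mul]
        exact Prod.ext k1.symm k2.symm
    have hinjf : Set.InjOn f (Finset.range n) := by
      intro i hi j hj hij
      by_contra hne
      refine hcol1 1 (Or.inl rfl) i j (Finset.mem_range.1 hi) (Finset.mem_range.1 hj) hne ?_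
      rw [← hij]
      simp
    have hinjg : Set.InjOn g (Finset.range n) := by
      intro i hi j hj hij
      apply hinjf hi hj
      rw [hg] at hij
      simp only [Prod.mk.injEq, neg_inj] at hij
      exact Prod.ext hij.1 hij.2
    have hdisj : Disjoint ((Finset.range n).image f) ((Finset.range n).image g) := by
      rw [Finset.disjoint_left]
      rintro v hvf hvg
      rw [Finset.mem_image] at hvf hvg
      obtain ⟨i, hi, hif⟩ := hvf
      obtain ⟨j, hj, hjg⟩ := hvg
      rw [Finset.mem_range] at hi hj
      have hfij : f i = (-(f j).1, -(f j).2) := by rw [hif, ← hjg, hg]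
      by_cases hij : i = j
      · subst hij
        exact hneg i hfij
      · refine hcol1 (-1) (Or.inr rfl) j i hj hi (fun hh => hij hh.symm) ?_
        rw [hfij]
        simp
    have hScard : S.card = 2 * n := by
      rw [hSdef, Finset.card_union_of_disjoint hdisj,
        Finset.card_image_of_injOn hinjf, Finset.card_image_of_injOn hinjg,
        Finset.card_range]
      ring
    have hb := count_bound N hN S hcop
    rw [hScard] at hb
    have hb' : 2 * (n : ℚ) ≤ (N : ℚ) ^ 2 * P := by exact_mod_cast hb
    have heq : (N : ℚ) ^ 2 / 2 * P = ((N : ℚ) ^ 2 * P) / 2 := by ring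
    linarith
  · -- small length
    have hle : (n : ℚ) ≤ 4 := by exact_mod_cast (by omega : n ≤ 4)
    have heq : (N : ℚ) ^ 2 / 2 * P = ((N : ℚ) ^ 2 * P) / 2 := by ring
    linarith

end Helpers

/-- For `N ≥ 5`, there is an irreducible λ-quiddity over `ℤ/Nℤ` of size at least `N`, and
every irreducible λ-quiddity over `ℤ/Nℤ` has size at most
`(N²/2) · ∏_{p | N prime} (1 − 1/p²) + 2`. -/
theorem stmt3 (N : ℕ) (hN : 5 ≤ N) :
    (∃ c : List (ZMod N), IrreducibleQuiddity Set.univ c ∧ N ≤ c.length) ∧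
    (∀ c : List (ZMod N), IrreducibleQuiddity Set.univ c →
      (c.length : ℚ) ≤
        (N : ℚ) ^ 2 / 2 * ∏ p ∈ N.primeFactors, (1 - 1 / (p : ℚ) ^ 2) + 2) := by
  constructor
  · exact ⟨List.replicate N (2 : ZMod N), replicate_irred N hN, by simp⟩
  · intro c hc
    exact upper_bound N hN c hc
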